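/- Systematicity of the lifted causal encoding: for a PPI P and horizon N_π, there exists a satisfying assignment to the CSP T_{P,N_π} (consisting of slot/action variables, argument variables, input/output pins with causal-support variables satisfying the binding, persistence, initial-state and goal constraints) if and only if there exists a feasible plan for P of length N_π. -/
import Mathlib


/-- The state reached after executing the effects of slots `1,…,k` from `s0`,
under the frame semantics (effects overwrite, everything else persists). -/
def runPlan {Term Val : Type*} (eff : ℕ → Term → Option Val) (s0 : Term → Val) :
    ℕ → Term → Val
  | 0 => s0
  | k + 1 => fun t => (eff (k + 1) t).getD (runPlan eff s0 k t)

/-- Systematicity of the lifted causal encoding: over a fixed set `Acts` of ground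
actions (pairs of precondition and effect partial assignments), there is a solution to
the causal CSP for horizon `N` — an assignment of actions to slots `1,…,N` together with
a causal support (initial state, or an earlier slot's matching effect) for every
precondition atom and every goal atom, with no intermediate slot assigning the supported
term a different value — if and only if there is an executable plan of length `N` from
`s0` whose final state satisfies all goal atoms. -/
lemma run_of_support {Term Val : Type*} (eff : ℕ → Term → Option Val)
    (s0 : Term → Val) (t : Term) (y : Val) :
    ∀ k, ((s0 t = y ∧ ∀ i', 1 ≤ i' → i' ≤ k → ∀ y', eff i' t = some y' → y' = y) ∨
      (∃ i, 1 ≤ i ∧ i ≤ k ∧ eff i t = some y ∧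
        ∀ i', i < i' → i' ≤ k → ∀ y', eff i' t = some y' → y' = y)) →
    runPlan eff s0 k t = y
  | 0, h => by
      rcases h with ⟨h1, _⟩ | ⟨i, h1, h2, _⟩
      · simpa [runPlan] using h1
      · omega
  | k+1, h => by
      show (eff (k+1) t).getD (runPlan eff s0 k t) = y
      cases he : eff (k+1) t with
      | some y' =>
        simp only [Option.getD_some]
        rcases h with ⟨h1, h2⟩ | ⟨i, h1, h2, h3, h4⟩
        · exact h2 _ (by omega) le_rfl _ he
        · rcases eq_or_lt_of_le h2 with rfl | hi
          · rw [he] at h3; exact Option.some.inj h3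
          · exact h4 _ hi le_rfl _ he
      | none =>
        simp only [Option.getD_none]
        apply run_of_support eff s0 t y k
        rcases h with ⟨h1, h2⟩ | ⟨i, h1, h2, h3, h4⟩
        · exact Or.inl ⟨h1, fun i' a b => h2 i' a (by omega)⟩
        · have hik : i ≤ k := by
            rcases eq_or_lt_of_le h2 with rfl | hi
            · rw [he] at h3; exact absurd h3 (by simp)
            · omega
          exact Or.inr ⟨i, h1, hik, h3, fun i' a b => h4 i' a (by omega)⟩

lemma support_of_run {Term Val : Type*} (eff : ℕ → Term → Option Val)
    (s0 : Term → Val) (t : Term) :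
    ∀ (k : ℕ) (y : Val), runPlan eff s0 k t = y →
      ((s0 t = y ∧ ∀ i', 1 ≤ i' → i' ≤ k → ∀ y', eff i' t = some y' → y' = y) ∨
      (∃ i, 1 ≤ i ∧ i ≤ k ∧ eff i t = some y ∧
        ∀ i', i < i' → i' ≤ k → ∀ y', eff i' t = some y' → y' = y))
  | 0, y, hy => Or.inl ⟨hy, fun i' a b => by omega⟩
  | k+1, y, hy => by
      have hy' : (eff (k+1) t).getD (runPlan eff s0 k t) = y := hy
      cases he : eff (k+1) t with
      | some y' =>
        rw [he, Option.getD_some] at hy'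
        subst hy'
        exact Or.inr ⟨k+1, by omega, le_rfl, he, fun i' a b => by omega⟩
      | none =>
        rw [he, Option.getD_none] at hy'
        have step : ∀ i', i' ≤ k + 1 → ∀ y', eff i' t = some y' → i' ≤ k := by
          intro i' hle y' h'
          rcases eq_or_lt_of_le hle with rfl | hi
          · rw [he] at h'; exact absurd h' (by simp)
          · omega
        rcases support_of_run eff s0 t k y hy' with ⟨h1, h2⟩ | ⟨i, h1, h2, h3, h4⟩
        · exact Or.inl ⟨h1, fun i' a b y' h' => h2 i' a (step i' b y' h') y' h'⟩
        · exact Or.inr ⟨i, h1, by omega, h3,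
            fun i' a b y' h' => h4 i' a (step i' b y' h') y' h'⟩

theorem stmt_10 {Term Val : Type*}
    (Acts : Set ((Term → Option Val) × (Term → Option Val)))
    (s0 : Term → Val) (goal : Term → Option Val) (N : ℕ) :
    (∃ π : ℕ → (Term → Option Val) × (Term → Option Val),
      (∀ j, 1 ≤ j → j ≤ N → π j ∈ Acts) ∧
      (∀ j, 1 ≤ j → j ≤ N → ∀ t y, (π j).1 t = some y →
        (s0 t = y ∧ ∀ i', 1 ≤ i' → i' < j → ∀ y', (π i').2 t = some y' → y' = y) ∨
        (∃ i, 1 ≤ i ∧ i < j ∧ (π i).2 t = some y ∧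
          ∀ i', i < i' → i' < j → ∀ y', (π i').2 t = some y' → y' = y)) ∧
      (∀ t y, goal t = some y →
        (s0 t = y ∧ ∀ i', 1 ≤ i' → i' ≤ N → ∀ y', (π i').2 t = some y' → y' = y) ∨
        (∃ i, 1 ≤ i ∧ i ≤ N ∧ (π i).2 t = some y ∧
          ∀ i', i < i' → i' ≤ N → ∀ y', (π i').2 t = some y' → y' = y))) ↔
    (∃ π : ℕ → (Term → Option Val) × (Term → Option Val),
      (∀ j, 1 ≤ j → j ≤ N → π j ∈ Acts) ∧
      (∀ j, 1 ≤ j → j ≤ N → ∀ t y, (π j).1 t = some y →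
        runPlan (fun i => (π i).2) s0 (j - 1) t = y) ∧
      (∀ t y, goal t = some y → runPlan (fun i => (π i).2) s0 N t = y)) := by
  constructor
  · rintro ⟨π, hA, hP, hG⟩
    refine ⟨π, hA, ?_, ?_⟩
    · intro j hj1 hjN t y hy
      apply run_of_support
      rcases hP j hj1 hjN t y hy with ⟨h1, h2⟩ | ⟨i, h1, h2, h3, h4⟩
      · exact Or.inl ⟨h1, fun i' a b => h2 i' a (by omega)⟩
      · exact Or.inr ⟨i, h1, by omega, h3, fun i' a b => h4 i' a (by omega)⟩
    · intro t y hy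
      apply run_of_support
      rcases hG t y hy with ⟨h1, h2⟩ | ⟨i, h1, h2, h3, h4⟩
      · exact Or.inl ⟨h1, h2⟩
      · exact Or.inr ⟨i, h1, h2, h3, h4⟩
  · rintro ⟨π, hA, hP, hG⟩
    refine ⟨π, hA, ?_, ?_⟩
    · intro j hj1 hjN t y hy
      rcases support_of_run (fun i => (π i).2) s0 t (j-1) y (hP j hj1 hjN t y hy)
        with ⟨h1, h2⟩ | ⟨i, h1, h2, h3, h4⟩
      · exact Or.inl ⟨h1, fun i' a b => h2 i' a (by omega)⟩
      · exact Or.inr ⟨i, h1, by omega, h3, fun i' a b => h4 i' a (by omega)⟩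
    · intro t y hy
      rcases support_of_run (fun i => (π i).2) s0 t N y (hG t y hy)
        with ⟨h1, h2⟩ | ⟨i, h1, h2, h3, h4⟩
      · exact Or.inl ⟨h1, h2⟩
      · exact Or.inr ⟨i, h1, h2, h3, h4⟩
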